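/- Define v(θ₁,θ₂) = 3Λ(θ₂) + Λ(θ₂+θ₁) + Λ(θ₂−θ₁) − Λ(2θ₂), where Λ is the Lobachevsky function. Then v(θ₁,θ₂) ≤ 0 for all −1 < θ₁ < 1 and 1/2 ≤ θ₂ ≤ 1. -/

import Mathlib

open scoped Real

/-- The Lobachevsky function `Λ(θ) = -∫₀^θ log|2 sin(πτ)| dτ`. -/
noncomputable def Lob (θ : ℝ) : ℝ := -∫ τ in (0:ℝ)..θ, Real.log |2 * Real.sin (π * τ)|

namespace LobAux

set_option linter.unusedVariables false

open Real MeasureTheory intervalIntegral Set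


open Real MeasureTheory intervalIntegral Set

noncomputable def L (τ : ℝ) : ℝ := Real.log |2 * Real.sin (π * τ)|

lemma Lob_eq (θ : ℝ) : Lob θ = -∫ τ in (0:ℝ)..θ, L τ := rfl

lemma measurable_L : Measurable L := by
  unfold L
  exact Real.measurable_log.comp ((measurable_const.mul (Real.measurable_sin.comp (measurable_const.mul measurable_id))).abs)

/-- a.e., `sin (a*x+b) ≠ 0`. -/
lemma ae_sin_ne (a b : ℝ) (ha : a ≠ 0) : ∀ᵐ x : ℝ, Real.sin (a * x + b) ≠ 0 := by
  rw [ae_iff]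
  refine measure_mono_null ?_
    ((Set.countable_range (fun n : ℤ => ((n : ℝ) * π - b) / a)).measure_zero _)
  intro x hx
  simp only [Set.mem_setOf_eq, not_not] at hx
  rcases Real.sin_eq_zero_iff.1 hx with ⟨n, hn⟩
  exact ⟨n, by field_simp; linarith⟩

lemma L_bound {τ : ℝ} (h0 : 0 < τ) (h1 : τ ≤ 1/2) : |L τ| ≤ 3 + 2 * τ ^ (-(1/2 : ℝ)) := by
  have hpi := Real.pi_pos
  have hs0 : 0 < Real.sin (π * τ) := Real.sin_pos_of_pos_of_lt_pi (by positivity) (by nlinarith)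
  have hs1 : Real.sin (π * τ) ≤ 1 := Real.sin_le_one _
  have hjordan : 2 * τ ≤ Real.sin (π * τ) := by
    have := Real.mul_le_sin (x := π * τ) (by positivity) (by nlinarith)
    calc 2 * τ = 2 / π * (π * τ) := by field_simp
    _ ≤ _ := this
  have habs : |2 * Real.sin (π * τ)| = 2 * Real.sin (π * τ) := abs_of_pos (by linarith)
  have hub : L τ ≤ 1 := by
    unfold L; rw [habs]
    have : Real.log (2 * Real.sin (π * τ)) ≤ 2 * Real.sin (π * τ) - 1 :=
      Real.log_le_sub_one_of_pos (by linarith)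
    linarith
  have hrp : (0:ℝ) < τ ^ (-(1/2:ℝ)) := Real.rpow_pos_of_pos h0 _
  have hlb : -(3 + 2 * τ ^ (-(1/2:ℝ))) ≤ L τ := by
    unfold L; rw [habs]
    have h4 : Real.log (4 * τ) ≤ Real.log (2 * Real.sin (π * τ)) := by
      apply Real.log_le_log (by linarith)
      linarith
    have hlogτ : -Real.log τ ≤ 2 * τ ^ (-(1/2:ℝ)) := by
      have h5 : Real.log (τ ^ (-(1/2:ℝ))) ≤ τ ^ (-(1/2:ℝ)) - 1 :=
        Real.log_le_sub_one_of_pos hrp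
      rw [Real.log_rpow h0] at h5
      linarith
    have h6 : Real.log (4 * τ) = Real.log 4 + Real.log τ :=
      Real.log_mul (by norm_num) (ne_of_gt h0)
    have h7 : (0:ℝ) ≤ Real.log 4 := Real.log_nonneg (by norm_num)
    have h8 : Real.log 4 ≤ 3 := by
      have := Real.log_le_sub_one_of_pos (x := 4) (by norm_num); linarith
    nlinarith
  rw [abs_le]
  constructor <;> [exact hlb; linarith [hrp]]

lemma L_reflect (τ : ℝ) : L (1 - τ) = L τ := by
  unfold L
  rw [show π * (1 - τ) = π - π * τ by ring, Real.sin_pi_sub]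

lemma L_periodic : Function.Periodic L 1 := by
  intro τ
  unfold L
  rw [show π * (τ + 1) = π * τ + π by ring, Real.sin_add_pi, mul_neg, abs_neg]


open Real MeasureTheory intervalIntegral Set


lemma LI_half : IntervalIntegrable L volume 0 (1/2) := by
  rw [intervalIntegrable_iff, uIoc_of_le (by norm_num : (0:ℝ) ≤ 1/2)]
  have hrpow : IntervalIntegrable (fun x : ℝ => x ^ (-(1/2:ℝ))) volume 0 (1/2) :=
    intervalIntegrable_rpow' (by norm_num)
  rw [intervalIntegrable_iff, uIoc_of_le (by norm_num : (0:ℝ) ≤ 1/2)] at hrpow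
  have hg : IntegrableOn (fun τ : ℝ => 3 + 2 * τ ^ (-(1/2:ℝ))) (Ioc 0 (1/2)) volume := by
    exact (integrableOn_const measure_Ioc_lt_top.ne enorm_ne_top).add (hrpow.const_mul 2)
  refine Integrable.mono hg measurable_L.aestronglyMeasurable ?_
  filter_upwards [ae_restrict_mem measurableSet_Ioc] with τ hτ
  have hb := L_bound hτ.1 hτ.2
  have hrp : (0:ℝ) < τ ^ (-(1/2:ℝ)) := Real.rpow_pos_of_pos hτ.1 _
  rw [Real.norm_eq_abs, Real.norm_eq_abs]
  rw [abs_of_pos (by linarith : (0:ℝ) < 3 + 2 * τ ^ (-(1/2:ℝ)))]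
  exact hb

lemma LI_unit : IntervalIntegrable L volume 0 1 := by
  refine LI_half.trans ?_
  have h := LI_half.comp_sub_left 1
  simp only [L_reflect] at h
  norm_num at h
  exact h.symm

lemma L_shift_nat : ∀ (n : ℕ) (x : ℝ), L (x + n) = L x := by
  intro n
  induction n with
  | zero => simp
  | succ n ih =>
    intro x
    have : x + (n + 1 : ℕ) = (x + n) + 1 := by push_cast; ring
    rw [this, L_periodic (x + n), ih]

lemma LI (a b : ℝ) : IntervalIntegrable L volume a b := by
  have key : ∀ n : ℕ, IntervalIntegrable L volume (-(n:ℝ)) n := by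
    intro n
    induction n with
    | zero => simp
    | succ n ih =>
      have h1 : IntervalIntegrable L volume (n:ℝ) ((n:ℝ)+1) := by
        have h := LI_unit.comp_sub_right (n:ℝ)
        have heq : (fun x : ℝ => L (x - n)) = L := by
          funext x
          have := L_shift_nat n (x - n)
          simpa using this.symm
        rw [heq] at h
        simpa [add_comm] using h
      have h2 : IntervalIntegrable L volume (-(n:ℝ)-1) (-(n:ℝ)) := by
        have h := LI_unit.comp_add_right ((n:ℝ)+1)
        have heq : (fun x : ℝ => L (x + ((n:ℝ)+1))) = L := by
          funext x
          have := L_shift_nat (n+1) x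
          push_cast at this
          simpa [add_assoc] using this
        rw [heq] at h
        have e1 : (0:ℝ) - ((n:ℝ)+1) = -(n:ℝ)-1 := by ring
        have e2 : (1:ℝ) - ((n:ℝ)+1) = -(n:ℝ) := by ring
        rwa [e1, e2] at h
      have := (h2.trans ih).trans h1
      push_cast
      have e1 : -((n:ℝ)+1) = -(n:ℝ)-1 := by ring
      rwa [e1]
  obtain ⟨n, hn⟩ := exists_nat_ge (max |a| |b|)
  refine (key n).mono_set ?_
  have ha : |a| ≤ n := le_trans (le_max_left _ _) hn
  have hb : |b| ≤ n := le_trans (le_max_right _ _) hn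
  rw [abs_le] at ha hb
  rw [Set.uIcc_of_le (by linarith [ha.1, ha.2] : -(n:ℝ) ≤ n)]
  exact Set.uIcc_subset_Icc ⟨ha.1, ha.2⟩ ⟨hb.1, hb.2⟩


open Real MeasureTheory intervalIntegral Set

/-- Key pointwise doubling identity away from a null set. -/
lemma L_double_eq {σ : ℝ} (h1 : Real.sin (π * σ) ≠ 0) (h2 : Real.sin (π * σ + π/2) ≠ 0) :
    L (2 * σ) = L σ + L (σ + 1/2) := by
  unfold L
  have hc : Real.cos (π * σ) ≠ 0 := by rwa [Real.sin_add_pi_div_two] at h2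
  have e1 : π * (2 * σ) = 2 * (π * σ) := by ring
  have e2 : (2:ℝ) * Real.sin (2 * (π * σ)) = (2 * Real.sin (π * σ)) * (2 * Real.cos (π * σ)) := by
    rw [Real.sin_two_mul]; ring
  have e3 : π * (σ + 1/2) = π * σ + π/2 := by ring
  rw [e1, e2, e3, Real.sin_add_pi_div_two, abs_mul,
    Real.log_mul (abs_ne_zero.mpr (mul_ne_zero two_ne_zero h1))
      (abs_ne_zero.mpr (mul_ne_zero two_ne_zero hc))]

lemma double_sub (θ : ℝ) : (∫ σ in (0:ℝ)..θ, L (2*σ))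
    = (∫ σ in (0:ℝ)..θ, L σ) + ∫ σ in (1/2:ℝ)..(θ+1/2), L σ := by
  have hint2 : IntervalIntegrable (fun σ : ℝ => L (σ + 1/2)) volume 0 θ := by
    have h := (LI (1/2) (θ + 1/2)).comp_add_right (1/2)
    have e1 : (1/2:ℝ) - 1/2 = 0 := by norm_num
    have e2 : (θ + 1/2:ℝ) - 1/2 = θ := by ring
    rwa [e1, e2] at h
  have hcong : (∫ σ in (0:ℝ)..θ, L (2*σ)) = ∫ σ in (0:ℝ)..θ, (L σ + L (σ + 1/2)) := by
    apply intervalIntegral.integral_congr_ae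
    have hπ : (π:ℝ) ≠ 0 := ne_of_gt Real.pi_pos
    filter_upwards [ae_sin_ne π 0 hπ, ae_sin_ne π (π/2) hπ] with σ hs hc _
    rw [add_zero] at hs
    exact L_double_eq hs hc
  rw [hcong, integral_add (LI 0 θ) hint2]
  congr 1
  have := integral_comp_add_right L (1/2) (a := (0:ℝ)) (b := θ)
  rw [this]
  norm_num

lemma int_01_zero : (∫ τ in (0:ℝ)..1, L τ) = 0 := by
  have h1 := double_sub (1/2)
  rw [show (1/2:ℝ) + 1/2 = 1 by norm_num] at h1
  have h2 := smul_integral_comp_mul_left (f := L) (a := (0:ℝ)) (b := (1/2:ℝ)) 2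
  rw [show (2:ℝ)*0 = 0 by norm_num, show (2:ℝ)*(1/2) = 1 by norm_num, smul_eq_mul] at h2
  have h3 : (∫ σ in (0:ℝ)..(1/2:ℝ), L σ) + ∫ σ in (1/2:ℝ)..1, L σ = ∫ σ in (0:ℝ)..1, L σ :=
    integral_add_adjacent_intervals (LI _ _) (LI _ _)
  linarith

lemma half_reflect : (∫ τ in (1/2:ℝ)..1, L τ) = ∫ τ in (0:ℝ)..(1/2:ℝ), L τ := by
  have h := integral_comp_sub_left (a := (0:ℝ)) (b := (1/2:ℝ)) L 1
  simp only [L_reflect] at h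
  norm_num at h
  exact h.symm

lemma int_half_zero : (∫ τ in (0:ℝ)..(1/2:ℝ), L τ) = 0 := by
  have h3 : (∫ σ in (0:ℝ)..(1/2:ℝ), L σ) + ∫ σ in (1/2:ℝ)..1, L σ = ∫ σ in (0:ℝ)..1, L σ :=
    integral_add_adjacent_intervals (LI _ _) (LI _ _)
  rw [half_reflect, int_01_zero] at h3
  linarith

lemma Lob_diff (a b : ℝ) : Lob b = Lob a - ∫ τ in a..b, L τ := by
  rw [Lob_eq, Lob_eq, ← integral_add_adjacent_intervals (LI 0 a) (LI a b)]
  ring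

lemma Lob_period (x : ℝ) : Lob (x + 1) = Lob x := by
  rw [Lob_diff x (x+1)]
  have h := L_periodic.intervalIntegral_add_eq x 0
  rw [zero_add, int_01_zero] at h
  rw [h]
  ring

lemma Lob_reflect (x : ℝ) : Lob (1 - x) = -Lob x := by
  have h1 : (∫ σ in (0:ℝ)..x, L (1 - σ)) = ∫ σ in (1-x)..(1:ℝ), L σ := by
    have := integral_comp_sub_left (a := (0:ℝ)) (b := x) L 1
    rw [this]; norm_num
  simp only [L_reflect] at h1
  have h2 : (∫ σ in (0:ℝ)..(1-x), L σ) + ∫ σ in (1-x)..(1:ℝ), L σ = ∫ σ in (0:ℝ)..1, L σ :=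
    integral_add_adjacent_intervals (LI _ _) (LI _ _)
  rw [int_01_zero, ← h1] at h2
  rw [Lob_eq, Lob_eq]
  linarith

lemma Lob_double (θ : ℝ) : Lob (2*θ) = 2 * Lob θ + 2 * Lob (θ + 1/2) := by
  have h1 := double_sub θ
  have h2 := smul_integral_comp_mul_left (f := L) (a := (0:ℝ)) (b := θ) 2
  rw [show (2:ℝ)*0 = 0 by norm_num, smul_eq_mul] at h2
  have h3 : (∫ σ in (0:ℝ)..(1/2:ℝ), L σ) + ∫ σ in (1/2:ℝ)..(θ+1/2), L σ
      = ∫ σ in (0:ℝ)..(θ+1/2), L σ :=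
    integral_add_adjacent_intervals (LI _ _) (LI _ _)
  rw [int_half_zero] at h3
  rw [Lob_eq, Lob_eq, Lob_eq]
  linarith


open Real MeasureTheory intervalIntegral Set

lemma L_nonpos {τ : ℝ} (h0 : 0 ≤ τ) (h1 : τ ≤ 1/6) : L τ ≤ 0 := by
  have hpi := Real.pi_pos
  refine Real.log_nonpos (abs_nonneg _) ?_
  have hs0 : 0 ≤ Real.sin (π * τ) :=
    Real.sin_nonneg_of_nonneg_of_le_pi (by positivity) (by nlinarith)
  rw [abs_of_nonneg (by linarith)]
  have hmono : Real.sin (π * τ) ≤ Real.sin (π / 6) :=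
    Real.strictMonoOn_sin.monotoneOn ⟨by nlinarith, by nlinarith⟩
      ⟨by nlinarith, by nlinarith⟩ (by nlinarith)
  rw [Real.sin_pi_div_six] at hmono
  linarith

lemma L_nonneg {τ : ℝ} (h0 : 1/6 ≤ τ) (h1 : τ ≤ 1/2) : 0 ≤ L τ := by
  have hpi := Real.pi_pos
  refine Real.log_nonneg ?_
  have hmono : Real.sin (π / 6) ≤ Real.sin (π * τ) :=
    Real.strictMonoOn_sin.monotoneOn ⟨by nlinarith, by nlinarith⟩
      ⟨by nlinarith, by nlinarith⟩ (by nlinarith)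
  rw [Real.sin_pi_div_six] at hmono
  rw [le_abs]
  left; linarith

lemma Lob_half : Lob (1/2) = 0 := by rw [Lob_eq, int_half_zero]; ring

lemma Lob_nonneg {x : ℝ} (h0 : 0 ≤ x) (h1 : x ≤ 1/2) : 0 ≤ Lob x := by
  rcases le_or_gt x (1/6) with h | h
  · rw [Lob_eq, neg_nonneg]
    have hn : 0 ≤ ∫ τ in (0:ℝ)..x, -L τ :=
      intervalIntegral.integral_nonneg h0
        (fun u hu => neg_nonneg.mpr (L_nonpos hu.1 (le_trans hu.2 h)))
    rw [intervalIntegral.integral_neg] at hn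
    linarith
  · rw [Lob_diff (1/2) x, Lob_half, zero_sub, neg_nonneg]
    have hn : 0 ≤ ∫ τ in x..(1/2:ℝ), L τ :=
      intervalIntegral.integral_nonneg h1
        (fun u hu => L_nonneg (le_trans (le_of_lt h) hu.1) hu.2)
    rw [intervalIntegral.integral_symm x (1/2)]
    linarith

lemma Lob_nonpos {x : ℝ} (h0 : 1/2 ≤ x) (h1 : x ≤ 1) : Lob x ≤ 0 := by
  have h := Lob_reflect x
  have h2 := Lob_nonneg (x := 1 - x) (by linarith) (by linarith)
  linarith

lemma sin_sq_diff (x y : ℝ) :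
    Real.sin x ^ 2 - Real.sin y ^ 2 = Real.sin (x + y) * Real.sin (x - y) := by
  rw [Real.sin_add, Real.sin_sub]
  nlinarith [Real.sin_sq_add_cos_sq x, Real.sin_sq_add_cos_sq y,
    Real.sin_sq_add_cos_sq (x+y)]

lemma sin_two_pi_nonpos {θ : ℝ} (h0 : 1/2 ≤ θ) (h1 : θ ≤ 1) : Real.sin (2*π*θ) ≤ 0 := by
  have hpi := Real.pi_pos
  have h := Real.sin_nonneg_of_nonneg_of_le_pi (x := 2*π*θ - π) (by nlinarith) (by nlinarith)
  rw [Real.sin_sub_pi] at h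
  linarith

lemma sin_two_pi_nonneg {u : ℝ} (h0 : 0 ≤ u) (h1 : u ≤ 1/2) : 0 ≤ Real.sin (2*π*u) := by
  have hpi := Real.pi_pos
  exact Real.sin_nonneg_of_nonneg_of_le_pi (by positivity) (by nlinarith)

/-- Core comparison: for `θ₂ ∈ [1/2,1]`, `u ∈ [1/2,1]`, away from zeros,
`L (θ₂ - u) ≤ L (θ₂ + u)`. -/
lemma L_comp_of_big {θ u : ℝ} (h0 : 1/2 ≤ θ) (h1 : θ ≤ 1) (h2 : 1/2 ≤ u) (h3 : u ≤ 1)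
    (hm : Real.sin (π * (θ - u)) ≠ 0) (hp : Real.sin (π * (θ + u)) ≠ 0) :
    L (θ - u) ≤ L (θ + u) := by
  have hsq : Real.sin (π*(θ-u)) ^ 2 ≤ Real.sin (π*(θ+u)) ^ 2 := by
    have h := sin_sq_diff (π*(θ+u)) (π*(θ-u))
    rw [show π*(θ+u) + π*(θ-u) = 2*π*θ by ring, show π*(θ+u) - π*(θ-u) = 2*π*u by ring] at h
    have ha := sin_two_pi_nonpos h0 h1
    have hb : Real.sin (2*π*u) ≤ 0 := by
      have hpi := Real.pi_pos
      have h := Real.sin_nonneg_of_nonneg_of_le_pi (x := 2*π*u - π) (by nlinarith) (by nlinarith)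
      rw [Real.sin_sub_pi] at h
      linarith
    nlinarith
  have habs : |Real.sin (π*(θ-u))| ≤ |Real.sin (π*(θ+u))| := by
    have := Real.sqrt_le_sqrt hsq
    rwa [Real.sqrt_sq_eq_abs, Real.sqrt_sq_eq_abs] at this
  unfold L
  apply Real.log_le_log
  · rw [abs_mul]
    have : (0:ℝ) < |Real.sin (π * (θ - u))| := abs_pos.mpr hm
    rw [abs_two]
    linarith
  · rw [abs_mul, abs_mul, abs_two]
    linarith
/-- For `u ∈ [0,1/2]` the comparison reverses. -/
lemma L_comp_of_small {θ u : ℝ} (h0 : 1/2 ≤ θ) (h1 : θ ≤ 1) (h2 : 0 ≤ u) (h3 : u ≤ 1/2)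
    (hm : Real.sin (π * (θ - u)) ≠ 0) (hp : Real.sin (π * (θ + u)) ≠ 0) :
    L (θ + u) ≤ L (θ - u) := by
  have hsq : Real.sin (π*(θ+u)) ^ 2 ≤ Real.sin (π*(θ-u)) ^ 2 := by
    have h := sin_sq_diff (π*(θ+u)) (π*(θ-u))
    rw [show π*(θ+u) + π*(θ-u) = 2*π*θ by ring, show π*(θ+u) - π*(θ-u) = 2*π*u by ring] at h
    have ha := sin_two_pi_nonpos h0 h1
    have hb := sin_two_pi_nonneg h2 h3
    nlinarith
  have habs : |Real.sin (π*(θ+u))| ≤ |Real.sin (π*(θ-u))| := by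
    have := Real.sqrt_le_sqrt hsq
    rwa [Real.sqrt_sq_eq_abs, Real.sqrt_sq_eq_abs] at this
  unfold L
  apply Real.log_le_log
  · rw [abs_mul]
    have : (0:ℝ) < |Real.sin (π * (θ + u))| := abs_pos.mpr hp
    rw [abs_two]
    linarith
  · rw [abs_mul, abs_mul, abs_two]
    linarith


open Real MeasureTheory intervalIntegral Set

lemma main_aux (t θ₂ : ℝ) (ht0 : 0 ≤ t) (ht1 : t < 1) (h3 : 1/2 ≤ θ₂) (h4 : θ₂ ≤ 1) :
    3 * Lob θ₂ + Lob (θ₂ + t) + Lob (θ₂ - t) - Lob (2 * θ₂) ≤ 0 := by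
  have hpi := Real.pi_ne_zero
  -- integrability of the shifted integrands
  have int1 : ∀ a b : ℝ, IntervalIntegrable (fun u => L (θ₂ - u)) volume a b := by
    intro a b
    have h := (LI (θ₂ - a) (θ₂ - b)).comp_sub_left θ₂
    simpa using h
  have int2 : ∀ a b : ℝ, IntervalIntegrable (fun u => L (θ₂ + u)) volume a b := by
    intro a b
    have h := (LI (θ₂ + a) (θ₂ + b)).comp_add_left θ₂
    simpa using h
  -- rewrite the brackets as integrals
  have hA : Lob (θ₂ + t) = Lob (θ₂ + 1/2) - ∫ u in (1/2:ℝ)..t, L (θ₂ + u) := by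
    rw [Lob_diff (θ₂ + 1/2) (θ₂ + t), integral_comp_add_left L θ₂]
  have hB : Lob (θ₂ - t) = Lob (θ₂ - 1/2) + ∫ u in (1/2:ℝ)..t, L (θ₂ - u) := by
    rw [Lob_diff (θ₂ - 1/2) (θ₂ - t), integral_comp_sub_left L θ₂,
      integral_symm (θ₂ - t) (θ₂ - 1/2)]
    ring
  have hper : Lob (θ₂ + 1/2) = Lob (θ₂ - 1/2) := by
    have h := Lob_period (θ₂ - 1/2)
    rw [show θ₂ - 1/2 + 1 = θ₂ + 1/2 by ring] at h
    exact h
  have hsub : (∫ u in (1/2:ℝ)..t, (L (θ₂ - u) - L (θ₂ + u)))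
      = (∫ u in (1/2:ℝ)..t, L (θ₂ - u)) - ∫ u in (1/2:ℝ)..t, L (θ₂ + u) :=
    integral_sub (int1 _ _) (int2 _ _)
  have hae_m : ∀ᵐ u : ℝ, Real.sin (π * (θ₂ - u)) ≠ 0 := by
    filter_upwards [ae_sin_ne (-π) (π * θ₂) (neg_ne_zero.mpr hpi)] with u h
    rwa [show -π * u + π * θ₂ = π * (θ₂ - u) by ring] at h
  have hae_p : ∀ᵐ u : ℝ, Real.sin (π * (θ₂ + u)) ≠ 0 := by
    filter_upwards [ae_sin_ne π (π * θ₂) hpi] with u h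
    rwa [show π * u + π * θ₂ = π * (θ₂ + u) by ring] at h
  have hJ : (∫ u in (1/2:ℝ)..t, (L (θ₂ - u) - L (θ₂ + u))) ≤ 0 := by
    rcases le_or_gt (1/2) t with h | h
    · rw [← neg_nonneg, ← intervalIntegral.integral_neg]
      apply integral_nonneg_of_ae_restrict h
      filter_upwards [ae_restrict_mem measurableSet_Icc,
        ae_restrict_of_ae hae_m, ae_restrict_of_ae hae_p] with u hu hm hp
      rw [Pi.zero_apply, neg_sub, sub_nonneg]
      exact L_comp_of_big h3 h4 hu.1 (le_trans hu.2 (le_of_lt ht1)) hm hp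
    · rw [integral_symm t (1/2)] at hsub ⊢
      rw [neg_nonpos]
      apply integral_nonneg_of_ae_restrict (le_of_lt h)
      filter_upwards [ae_restrict_mem measurableSet_Icc,
        ae_restrict_of_ae hae_m, ae_restrict_of_ae hae_p] with u hu hm hp
      rw [Pi.zero_apply, sub_nonneg]
      exact L_comp_of_small h3 h4 (le_trans ht0 hu.1) hu.2 hm hp
  have hdup := Lob_double θ₂
  have hnp := Lob_nonpos h3 h4
  linarith

end LobAux

/-- `v(θ₁,θ₂) = 3Λ(θ₂) + Λ(θ₂+θ₁) + Λ(θ₂−θ₁) − Λ(2θ₂) ≤ 0` for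
`-1 < θ₁ < 1` and `1/2 ≤ θ₂ ≤ 1`. -/
theorem v_nonpositive (θ₁ θ₂ : ℝ) (h1 : -1 < θ₁) (h2 : θ₁ < 1)
    (h3 : 1/2 ≤ θ₂) (h4 : θ₂ ≤ 1) :
    3 * Lob θ₂ + Lob (θ₂ + θ₁) + Lob (θ₂ - θ₁) - Lob (2 * θ₂) ≤ 0 := by
  rcases le_or_gt 0 θ₁ with h | h
  · exact LobAux.main_aux θ₁ θ₂ h h2 h3 h4
  · have key := LobAux.main_aux (-θ₁) θ₂ (by linarith) (by linarith) h3 h4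
    rw [show θ₂ + -θ₁ = θ₂ - θ₁ by ring, show θ₂ - -θ₁ = θ₂ + θ₁ by ring] at key
    linarith
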